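/- If f : ℝ≥0 → ℂ is Lipschitz with constant L and f(0) = 0, then for all d × d complex matrices A and B, ‖f_s(A) - f_s(B)‖_F ≤ √2·L·‖A - B‖_F, and the constant √2 cannot be replaced by any smaller constant valid for all such Lipschitz f. -/

import Mathlib

open Matrix

/-- The Frobenius (Hilbert–Schmidt) norm of a complex square matrix. -/
noncomputable def frobNorm {d : ℕ} (M : Matrix (Fin d) (Fin d) ℂ) : ℝ :=
  Real.sqrt (∑ i, ∑ j, ‖M i j‖ ^ 2)

/-- Data of a singular value decomposition of a `d × d` complex matrix:
unitaries `U`, `V` and nonnegative singular values `σ`. -/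
structure SVDData (d : ℕ) where
  U : Matrix (Fin d) (Fin d) ℂ
  V : Matrix (Fin d) (Fin d) ℂ
  σ : Fin d → ℝ
  hU : U ∈ Matrix.unitaryGroup (Fin d) ℂ
  hV : V ∈ Matrix.unitaryGroup (Fin d) ℂ
  hσ : ∀ i, 0 ≤ σ i

/-- The matrix `U Σ V*` determined by the SVD data. -/
noncomputable def SVDData.matrix {d : ℕ} (S : SVDData d) : Matrix (Fin d) (Fin d) ℂ :=
  S.U * Matrix.diagonal (fun i => (S.σ i : ℂ)) * (S.V)ᴴ

/-- The singular value functional calculus `f_s`: apply `f` to the singular values. -/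
noncomputable def SVDData.apply {d : ℕ} (S : SVDData d) (f : ℝ → ℂ) :
    Matrix (Fin d) (Fin d) ℂ :=
  S.U * Matrix.diagonal (fun i => f (S.σ i)) * (S.V)ᴴ



namespace Helper17

set_option linter.unusedSectionVars false

variable {n : Type*} [Fintype n] [DecidableEq n]

noncomputable def frobSq {m : Type*} [Fintype m] (M : Matrix n m ℂ) : ℝ :=
  ∑ i, ∑ j, Complex.normSq (M i j)

lemma frobSq_nonneg {m : Type*} [Fintype m] (M : Matrix n m ℂ) : 0 ≤ frobSq M := by
  apply Finset.sum_nonneg; intro i _; apply Finset.sum_nonneg; intro j _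
  exact Complex.normSq_nonneg _

lemma frobSq_eq_trace (M : Matrix n n ℂ) : (frobSq M : ℂ) = Matrix.trace (Mᴴ * M) := by
  simp only [frobSq, Matrix.trace, Matrix.diag, Matrix.mul_apply, Matrix.conjTranspose_apply]
  push_cast
  rw [Finset.sum_comm]
  congr 1; ext i; congr 1; ext j
  rw [Complex.normSq_eq_conj_mul_self]; rfl

lemma frobSq_mul_left {U : Matrix n n ℂ} (h : Uᴴ * U = 1) (M : Matrix n n ℂ) :
    frobSq (U * M) = frobSq M := by
  have : ((frobSq (U * M) : ℝ) : ℂ) = ((frobSq M : ℝ) : ℂ) := by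
    rw [frobSq_eq_trace, frobSq_eq_trace, Matrix.conjTranspose_mul]
    rw [show Mᴴ * Uᴴ * (U * M) = Mᴴ * (Uᴴ * U) * M by noncomm_ring, h, Matrix.mul_one]
  exact_mod_cast this

lemma frobSq_mul_right {Q : Matrix n n ℂ} (h : Q * Qᴴ = 1) (M : Matrix n n ℂ) :
    frobSq (M * Q) = frobSq M := by
  have : ((frobSq (M * Q) : ℝ) : ℂ) = ((frobSq M : ℝ) : ℂ) := by
    rw [frobSq_eq_trace, frobSq_eq_trace, Matrix.conjTranspose_mul]
    rw [show Qᴴ * Mᴴ * (M * Q) = Qᴴ * (Mᴴ * (M * Q)) by noncomm_ring,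
      Matrix.trace_mul_comm, show Mᴴ * (M * Q) * Qᴴ = Mᴴ * M * (Q * Qᴴ) by noncomm_ring,
      h, Matrix.mul_one]
  exact_mod_cast this

lemma key (L : ℝ) (hL : 0 ≤ L) (P R : Matrix n n ℂ)
    (hP : P ∈ Matrix.unitaryGroup n ℂ) (hR : R ∈ Matrix.unitaryGroup n ℂ)
    (x y x' y' : n → ℂ)
    (h : ∀ i k, ‖x i - y k‖ ≤ L * ‖x' i - y' k‖) :
    frobSq (P * diagonal x * Pᴴ - R * diagonal y * Rᴴ) ≤
      L ^ 2 * frobSq (P * diagonal x' * Pᴴ - R * diagonal y' * Rᴴ) := by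
  have hP1 : P * Pᴴ = 1 := by
    simpa [Matrix.star_eq_conjTranspose] using (Matrix.mem_unitaryGroup_iff.mp hP)
  have hP2 : Pᴴ * P = 1 := by
    simpa [Matrix.star_eq_conjTranspose] using (Matrix.mem_unitaryGroup_iff'.mp hP)
  have hR1 : R * Rᴴ = 1 := by
    simpa [Matrix.star_eq_conjTranspose] using (Matrix.mem_unitaryGroup_iff.mp hR)
  have hR2 : Rᴴ * R = 1 := by
    simpa [Matrix.star_eq_conjTranspose] using (Matrix.mem_unitaryGroup_iff'.mp hR)
  set Q : Matrix n n ℂ := Pᴴ * R with hQ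
  have hQ1 : Q * Qᴴ = 1 := by
    rw [hQ, Matrix.conjTranspose_mul, Matrix.conjTranspose_conjTranspose]
    rw [show Pᴴ * R * (Rᴴ * P) = Pᴴ * (R * Rᴴ) * P by noncomm_ring, hR1, Matrix.mul_one, hP2]
  have hQ2 : Qᴴ * Q = 1 := by
    rw [hQ, Matrix.conjTranspose_mul, Matrix.conjTranspose_conjTranspose]
    rw [show Rᴴ * P * (Pᴴ * R) = Rᴴ * (P * Pᴴ) * R by noncomm_ring, hP1, Matrix.mul_one, hR2]
  have hPQ : P * Q = R := by rw [hQ, ← Matrix.mul_assoc, hP1, Matrix.one_mul]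
  have hQP : Qᴴ * Pᴴ = Rᴴ := by
    rw [hQ, Matrix.conjTranspose_mul, Matrix.conjTranspose_conjTranspose,
      Matrix.mul_assoc, hP1, Matrix.mul_one]
  -- reduce via conjugation by P
  have reduce : ∀ z w : n → ℂ,
      frobSq (P * diagonal z * Pᴴ - R * diagonal w * Rᴴ)
        = frobSq (Matrix.of fun i k => Q i k * (z i - w k)) := by
    intro z w
    have e1 : P * diagonal z * Pᴴ - R * diagonal w * Rᴴ
        = P * ((diagonal z - Q * diagonal w * Qᴴ) * Pᴴ) := by
      rw [← hPQ, Matrix.conjTranspose_mul]; noncomm_ring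
    have e2 : diagonal z - Q * diagonal w * Qᴴ
        = (Matrix.of fun i k => Q i k * (z i - w k)) * Qᴴ := by
      ext i j
      simp only [Matrix.sub_apply, Matrix.mul_apply, Matrix.conjTranspose_apply,
        Matrix.of_apply, Matrix.mul_diagonal]
      have h1 : (∑ k, Q i k * (z i - w k) * star (Q j k))
          = z i * (∑ k, Q i k * star (Q j k)) - ∑ k, Q i k * w k * star (Q j k) := by
        rw [Finset.mul_sum, ← Finset.sum_sub_distrib]
        congr 1; ext k; ring
      have h2 : (∑ k, Q i k * star (Q j k)) = (1 : Matrix n n ℂ) i j := by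
        rw [← hQ1]; simp [Matrix.mul_apply, Matrix.conjTranspose_apply]
      have h3 : diagonal z i j = z i * (1 : Matrix n n ℂ) i j := by
        by_cases hij : i = j <;> simp [hij, Matrix.diagonal_apply, Matrix.one_apply]
      rw [h1, h2, h3]
      refine congrArg (fun t => z i * (1 : Matrix n n ℂ) i j - t) ?_
      refine Finset.sum_congr rfl fun k _ => ?_
      have : (∑ j', Q i j' * diagonal w j' k) = Q i k * w k := by
        simp [Matrix.diagonal_apply, mul_ite]
      rw [this]
    rw [e1, e2, frobSq_mul_left hP2, frobSq_mul_right (by simpa using hP2),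
      frobSq_mul_right (show Qᴴ * Qᴴᴴ = 1 by simpa using hQ2)]
  rw [reduce x y, reduce x' y']
  unfold frobSq
  rw [Finset.mul_sum]
  refine Finset.sum_le_sum fun i _ => ?_
  rw [Finset.mul_sum]
  refine Finset.sum_le_sum fun k _ => ?_
  simp only [Matrix.of_apply, Complex.normSq_mul]
  have hz : Complex.normSq (x i - y k) ≤ L ^ 2 * Complex.normSq (x' i - y' k) := by
    have := h i k
    have h4 : Complex.normSq (x i - y k) = ‖x i - y k‖ ^ 2 := by
      rw [← Complex.sq_norm]
    have h5 : Complex.normSq (x' i - y' k) = ‖x' i - y' k‖ ^ 2 := by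
      rw [← Complex.sq_norm]
    rw [h4, h5, ← mul_pow]
    exact pow_le_pow_left₀ (norm_nonneg _) this 2
  calc Complex.normSq (Q i k) * Complex.normSq (x i - y k)
      ≤ Complex.normSq (Q i k) * (L ^ 2 * Complex.normSq (x' i - y' k)) :=
        mul_le_mul_of_nonneg_left hz (Complex.normSq_nonneg _)
    _ = L ^ 2 * (Complex.normSq (Q i k) * Complex.normSq (x' i - y' k)) := by ring

lemma frobSq_conjTranspose {m : Type*} [Fintype m] (M : Matrix n m ℂ) :
    frobSq Mᴴ = frobSq M := by
  unfold frobSq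
  rw [Finset.sum_comm]
  simp [Matrix.conjTranspose_apply, Complex.normSq_conj]

lemma frobSq_fromBlocks {m : Type*} [Fintype m] [DecidableEq m]
    (A : Matrix n n ℂ) (B : Matrix n m ℂ) (C : Matrix m n ℂ) (D : Matrix m m ℂ) :
    frobSq (Matrix.fromBlocks A B C D)
      = frobSq A + frobSq B + (frobSq C + frobSq D) := by
  unfold frobSq
  rw [Fintype.sum_sum_type]
  simp only [Fintype.sum_sum_type, Matrix.fromBlocks_apply₁₁, Matrix.fromBlocks_apply₁₂,
    Matrix.fromBlocks_apply₂₁, Matrix.fromBlocks_apply₂₂]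
  rw [Finset.sum_add_distrib, Finset.sum_add_distrib]

/-- The dilation unitary. -/
noncomputable def bigU {d : ℕ} (U V : Matrix (Fin d) (Fin d) ℂ) :
    Matrix (Fin d ⊕ Fin d) (Fin d ⊕ Fin d) ℂ :=
  ((Real.sqrt 2 : ℂ))⁻¹ • Matrix.fromBlocks U U V (-V)

lemma sqrt2_mul : star ((Real.sqrt 2 : ℂ))⁻¹ * ((Real.sqrt 2 : ℂ))⁻¹ * 2 = 1 := by
  rw [← Complex.ofReal_inv, Complex.star_def, Complex.conj_ofReal]
  have h2 : Real.sqrt 2 * Real.sqrt 2 = 2 := Real.mul_self_sqrt (by norm_num)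
  have h0 : (Real.sqrt 2 : ℝ) ≠ 0 := by positivity
  push_cast
  field_simp
  exact_mod_cast (by rw [sq]; exact h2.symm : (2:ℝ) = Real.sqrt 2 ^ 2)

lemma bigU_mem {d : ℕ} {U V : Matrix (Fin d) (Fin d) ℂ}
    (hU : U ∈ Matrix.unitaryGroup (Fin d) ℂ) (hV : V ∈ Matrix.unitaryGroup (Fin d) ℂ) :
    bigU U V ∈ Matrix.unitaryGroup (Fin d ⊕ Fin d) ℂ := by
  have hU' : Uᴴ * U = 1 := by
    simpa [Matrix.star_eq_conjTranspose] using (Matrix.mem_unitaryGroup_iff'.mp hU)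
  have hV' : Vᴴ * V = 1 := by
    simpa [Matrix.star_eq_conjTranspose] using (Matrix.mem_unitaryGroup_iff'.mp hV)
  rw [Matrix.mem_unitaryGroup_iff']
  rw [Matrix.star_eq_conjTranspose]
  unfold bigU
  rw [Matrix.conjTranspose_smul, Matrix.smul_mul, Matrix.mul_smul, smul_smul]
  have hblocks : (Matrix.fromBlocks U U V (-V))ᴴ * (Matrix.fromBlocks U U V (-V))
      = (2 : ℂ) • (1 : Matrix (Fin d ⊕ Fin d) (Fin d ⊕ Fin d) ℂ) := by
    rw [Matrix.fromBlocks_conjTranspose, Matrix.fromBlocks_multiply]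
    rw [← Matrix.fromBlocks_one, Matrix.fromBlocks_smul]
    simp only [Matrix.conjTranspose_neg, Matrix.neg_mul, Matrix.mul_neg, neg_neg, hU', hV',
      smul_zero]
    congr 1 <;> (try rw [two_smul]) <;> abel
  rw [hblocks, smul_smul, sqrt2_mul, one_smul]

lemma bigU_conj {d : ℕ} (U V : Matrix (Fin d) (Fin d) ℂ) (v : Fin d → ℂ) :
    bigU U V * Matrix.diagonal (Sum.elim v (fun i => - v i)) * (bigU U V)ᴴ
      = Matrix.fromBlocks 0 (U * Matrix.diagonal v * Vᴴ) (V * Matrix.diagonal v * Uᴴ) 0 := by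
  have hdiag : Matrix.diagonal (Sum.elim v (fun i => - v i))
      = Matrix.fromBlocks (Matrix.diagonal v) 0 0 (-(Matrix.diagonal v)) := by
    rw [← Matrix.fromBlocks_diagonal]
    congr 1
    exact congrArg _ (Matrix.diagonal_neg v).symm
  unfold bigU
  rw [hdiag, Matrix.conjTranspose_smul]
  simp only [Matrix.smul_mul, Matrix.mul_smul, smul_smul]
  have hmul : Matrix.fromBlocks U U V (-V)
        * Matrix.fromBlocks (Matrix.diagonal v) 0 0 (-(Matrix.diagonal v))
        * (Matrix.fromBlocks U U V (-V))ᴴ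
      = (2 : ℂ) • Matrix.fromBlocks 0 (U * Matrix.diagonal v * Vᴴ)
          (V * Matrix.diagonal v * Uᴴ) 0 := by
    rw [Matrix.fromBlocks_conjTranspose, Matrix.fromBlocks_multiply, Matrix.fromBlocks_multiply,
      Matrix.fromBlocks_smul]
    simp only [Matrix.conjTranspose_neg, Matrix.mul_zero, Matrix.zero_mul, Matrix.mul_neg,
      Matrix.neg_mul, neg_neg, add_zero, zero_add, smul_zero, two_smul, add_neg_cancel]
  rw [hmul, smul_smul]
  rw [sqrt2_mul, one_smul]

lemma frobNorm_eq_sqrt_frobSq {d : ℕ} (M : Matrix (Fin d) (Fin d) ℂ) :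
    frobNorm M = Real.sqrt (frobSq M) := by
  unfold frobNorm frobSq
  congr 1
  refine Finset.sum_congr rfl fun i _ => Finset.sum_congr rfl fun j _ => ?_
  rw [← Complex.sq_norm]

lemma part1 (f : ℝ → ℂ) (L : ℝ) (hf0 : f 0 = 0)
    (hf : ∀ x y : ℝ, 0 ≤ x → 0 ≤ y → ‖f x - f y‖ ≤ L * |x - y|)
    (d : ℕ) (SA SB : SVDData d) :
    frobNorm (SA.apply f - SB.apply f)
      ≤ Real.sqrt 2 * L * frobNorm (SA.matrix - SB.matrix) := by
  have hL : 0 ≤ L := by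
    have h10 := hf 1 0 zero_le_one le_rfl
    simp only [hf0, sub_zero, abs_one, mul_one] at h10
    exact le_trans (norm_nonneg _) h10
  -- the odd extension
  set g : ℝ → ℂ := fun t => if 0 ≤ t then f t else -f (-t) with hgdef
  have hg : ∀ x y : ℝ, ‖g x - g y‖ ≤ L * |x - y| := by
    intro x y
    rcases le_or_gt 0 x with hx | hx <;> rcases le_or_gt 0 y with hy | hy
    · simpa [hgdef, hx, hy] using hf x y hx hy
    · have : g x - g y = (f x - f 0) + (f (-y) - f 0) := by
        simp only [hgdef, hx, not_le.mpr hy, hf0, if_true, if_false, sub_zero]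
        ring
      rw [this]
      calc ‖(f x - f 0) + (f (-y) - f 0)‖ ≤ ‖f x - f 0‖ + ‖f (-y) - f 0‖ := norm_add_le _ _
        _ ≤ L * |x - 0| + L * |(-y) - 0| :=
            add_le_add (hf x 0 hx le_rfl) (hf (-y) 0 (by linarith) le_rfl)
        _ = L * x + L * (-y) := by
            rw [sub_zero, sub_zero, abs_of_nonneg hx, abs_of_nonneg (by linarith : (0:ℝ) ≤ -y)]
        _ ≤ L * |x - y| := by
            rw [abs_of_nonneg (by linarith : (0:ℝ) ≤ x - y)]; nlinarith
    · have : g x - g y = -((f y - f 0) + (f (-x) - f 0)) := by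
        simp only [hgdef, hy, not_le.mpr hx, hf0, if_true, if_false, sub_zero]
        ring
      rw [this, norm_neg]
      calc ‖(f y - f 0) + (f (-x) - f 0)‖ ≤ ‖f y - f 0‖ + ‖f (-x) - f 0‖ := norm_add_le _ _
        _ ≤ L * |y - 0| + L * |(-x) - 0| :=
            add_le_add (hf y 0 hy le_rfl) (hf (-x) 0 (by linarith) le_rfl)
        _ = L * y + L * (-x) := by
            rw [sub_zero, sub_zero, abs_of_nonneg hy, abs_of_nonneg (by linarith : (0:ℝ) ≤ -x)]
        _ ≤ L * |x - y| := by
            rw [abs_of_nonpos (by linarith : x - y ≤ 0)]; nlinarith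
    · have : g x - g y = -(f (-x) - f (-y)) := by
        simp only [hgdef, not_le.mpr hx, not_le.mpr hy, if_false]
        ring
      rw [this, norm_neg]
      calc ‖f (-x) - f (-y)‖ ≤ L * |(-x) - (-y)| := hf _ _ (by linarith) (by linarith)
        _ = L * |x - y| := by rw [← abs_neg]; ring_nf
  -- data
  set va : Fin d → ℂ := fun i => f (SA.σ i) with hva
  set vb : Fin d → ℂ := fun i => f (SB.σ i) with hvb
  set wa : Fin d → ℂ := fun i => (SA.σ i : ℂ) with hwa
  set wb : Fin d → ℂ := fun i => (SB.σ i : ℂ) with hwb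
  have hgneg : ∀ a : ℝ, 0 ≤ a → g (-a) = -f a := by
    intro a ha
    rcases eq_or_lt_of_le ha with h | h
    · simp [hgdef, ← h, hf0]
    · simp [hgdef, not_le.mpr (neg_neg_iff_pos.mpr h)]
  have hgpos : ∀ a : ℝ, 0 ≤ a → g a = f a := fun a ha => by simp [hgdef, ha]
  -- the entrywise hypothesis of `key`
  have hkeyh : ∀ i k : Fin d ⊕ Fin d,
      ‖(Sum.elim va fun i => -va i) i - (Sum.elim vb fun i => -vb i) k‖
        ≤ L * ‖(Sum.elim wa fun i => -wa i) i - (Sum.elim wb fun i => -wb i) k‖ := by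
    have norm_coe : ∀ a b : ℝ, ‖((a : ℂ)) - (b : ℂ)‖ = |a - b| := by
      intro a b
      rw [← Complex.ofReal_sub, Complex.norm_real, Real.norm_eq_abs]
    have norm_coe' : ∀ a b : ℝ, ‖((a : ℂ)) - -(b : ℂ)‖ = |a - (-b)| := by
      intro a b
      rw [show ((a:ℂ)) - -(b:ℂ) = ((a:ℂ)) - ((-b : ℝ) : ℂ) by push_cast; ring, norm_coe]
    have norm_coe'' : ∀ a b : ℝ, ‖-((a : ℂ)) - (b : ℂ)‖ = |(-a) - b| := by
      intro a b
      rw [show -((a:ℂ)) - (b:ℂ) = (((-a) : ℝ) : ℂ) - ((b : ℝ) : ℂ) by push_cast; ring, norm_coe]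
    have norm_coe''' : ∀ a b : ℝ, ‖-((a : ℂ)) - -(b : ℂ)‖ = |(-a) - (-b)| := by
      intro a b
      rw [show -((a:ℂ)) - -(b:ℂ) = (((-a) : ℝ) : ℂ) - (((-b) : ℝ) : ℂ) by push_cast; ring,
        norm_coe]
    rintro (i | i) (k | k) <;>
      simp only [Sum.elim_inl, Sum.elim_inr, hva, hvb, hwa, hwb]
    · rw [norm_coe, ← hgpos _ (SA.hσ i), ← hgpos _ (SB.hσ k)]; exact hg _ _
    · rw [norm_coe', ← hgpos _ (SA.hσ i), ← hgneg _ (SB.hσ k)]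
      exact hg _ _
    · rw [norm_coe'', ← hgneg _ (SA.hσ i), ← hgpos _ (SB.hσ k)]
      exact hg _ _
    · rw [norm_coe''', ← hgneg _ (SA.hσ i), ← hgneg _ (SB.hσ k)]
      exact hg _ _
  have hkey := key (n := Fin d ⊕ Fin d) L hL (bigU SA.U SA.V) (bigU SB.U SB.V)
    (bigU_mem SA.hU SA.hV) (bigU_mem SB.hU SB.hV)
    (Sum.elim va fun i => -va i) (Sum.elim vb fun i => -vb i)
    (Sum.elim wa fun i => -wa i) (Sum.elim wb fun i => -wb i) hkeyh
  rw [bigU_conj SA.U SA.V va, bigU_conj SB.U SB.V vb,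
      bigU_conj SA.U SA.V wa, bigU_conj SB.U SB.V wb] at hkey
  -- identify blocks
  have hsub : ∀ (X Y X' Y' : Matrix (Fin d) (Fin d) ℂ),
      Matrix.fromBlocks 0 X Y 0 - Matrix.fromBlocks 0 X' Y' 0
        = Matrix.fromBlocks 0 (X - X') (Y - Y') (0 : Matrix (Fin d) (Fin d) ℂ) := by
    intro X Y X' Y'
    rw [sub_eq_add_neg, Matrix.fromBlocks_neg, Matrix.fromBlocks_add]
    simp [sub_eq_add_neg]
  rw [hsub, hsub, frobSq_fromBlocks, frobSq_fromBlocks] at hkey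
  have hAa : SA.U * Matrix.diagonal va * SA.Vᴴ = SA.apply f := rfl
  have hAb : SB.U * Matrix.diagonal vb * SB.Vᴴ = SB.apply f := rfl
  have hMa : SA.U * Matrix.diagonal wa * SA.Vᴴ = SA.matrix := rfl
  have hMb : SB.U * Matrix.diagonal wb * SB.Vᴴ = SB.matrix := rfl
  have hhat : ∀ S : SVDData d, S.V * Matrix.diagonal (fun i => ((S.σ i : ℝ) : ℂ)) * S.Uᴴ
      = (S.matrix)ᴴ := by
    intro S
    have hd : (Matrix.diagonal (fun i => ((S.σ i : ℝ) : ℂ)))ᴴ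
        = Matrix.diagonal (fun i => ((S.σ i : ℝ) : ℂ)) := by
      rw [Matrix.diagonal_conjTranspose,
        show (star fun i => ((S.σ i : ℝ) : ℂ)) = (fun i => ((S.σ i : ℝ) : ℂ)) from
          funext fun i => Complex.conj_ofReal _]
    rw [SVDData.matrix, Matrix.conjTranspose_mul, Matrix.conjTranspose_mul,
      Matrix.conjTranspose_conjTranspose, hd, Matrix.mul_assoc]
  have hz : frobSq (0 : Matrix (Fin d) (Fin d) ℂ) = 0 := by
    have hzz : ∀ i j : Fin d, Complex.normSq ((0 : Matrix (Fin d) (Fin d) ℂ) i j) = 0 := by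
      intro i j; simp
    unfold frobSq
    rw [Finset.sum_congr rfl fun i _ => Finset.sum_congr rfl fun j _ => hzz i j]
    simp
  rw [hAa, hAb, hMa, hMb] at hkey
  rw [show SA.V * Matrix.diagonal wa * SA.Uᴴ = (SA.matrix)ᴴ from hhat SA,
      show SB.V * Matrix.diagonal wb * SB.Uᴴ = (SB.matrix)ᴴ from hhat SB] at hkey
  rw [← Matrix.conjTranspose_sub, frobSq_conjTranspose, hz] at hkey
  simp only [zero_add, add_zero] at hkey
  -- extract the squared inequality
  have hsq : frobSq (SA.apply f - SB.apply f)
      ≤ 2 * L ^ 2 * frobSq (SA.matrix - SB.matrix) := by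
    nlinarith [hkey,
      frobSq_nonneg (SA.V * Matrix.diagonal va * SA.Uᴴ - SB.V * Matrix.diagonal vb * SB.Uᴴ)]
  -- take square roots
  rw [frobNorm_eq_sqrt_frobSq, frobNorm_eq_sqrt_frobSq]
  calc Real.sqrt (frobSq (SA.apply f - SB.apply f))
      ≤ Real.sqrt (2 * L ^ 2 * frobSq (SA.matrix - SB.matrix)) := Real.sqrt_le_sqrt hsq
    _ = Real.sqrt 2 * L * Real.sqrt (frobSq (SA.matrix - SB.matrix)) := by
        rw [Real.sqrt_mul (by positivity), Real.sqrt_mul (by norm_num),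
          Real.sqrt_sq hL]

noncomputable def fex : ℝ → ℂ :=
  fun x => ((min x 1 : ℝ) : ℂ) + ((max (x - 1) 0 : ℝ) : ℂ) * Complex.I

lemma fex_zero : fex 0 = 0 := by
  unfold fex
  norm_num

lemma fex_lip : ∀ x y : ℝ, 0 ≤ x → 0 ≤ y → ‖fex x - fex y‖ ≤ 1 * |x - y| := by
  intro x y hx hy
  set a : ℝ := min x 1 - min y 1 with ha
  set b : ℝ := max (x - 1) 0 - max (y - 1) 0 with hb
  have hfe : fex x - fex y = (a : ℂ) + (b : ℂ) * Complex.I := by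
    unfold fex; push_cast [ha, hb]; ring
  rw [hfe, Complex.norm_add_mul_I, one_mul]
  have hsq : a ^ 2 + b ^ 2 ≤ |x - y| ^ 2 := by
    have hxy2 : |x - y| ^ 2 = (x - y) ^ 2 := sq_abs _
    rw [hxy2]
    rcases le_total x 1 with h1 | h1 <;> rcases le_total y 1 with h2 | h2
    · rw [ha, hb, min_eq_left h1, min_eq_left h2,
        max_eq_right (by linarith : x - 1 ≤ 0), max_eq_right (by linarith : y - 1 ≤ 0)]
      nlinarith
    · rw [ha, hb, min_eq_left h1, min_eq_right h2,
        max_eq_right (by linarith : x - 1 ≤ 0), max_eq_left (by linarith : (0:ℝ) ≤ y - 1)]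
      nlinarith
    · rw [ha, hb, min_eq_right h1, min_eq_left h2,
        max_eq_left (by linarith : (0:ℝ) ≤ x - 1), max_eq_right (by linarith : y - 1 ≤ 0)]
      nlinarith
    · rw [ha, hb, min_eq_right h1, min_eq_right h2,
        max_eq_left (by linarith : (0:ℝ) ≤ x - 1), max_eq_left (by linarith : (0:ℝ) ≤ y - 1)]
      nlinarith
  calc Real.sqrt (a ^ 2 + b ^ 2) ≤ Real.sqrt (|x - y| ^ 2) := Real.sqrt_le_sqrt hsq
    _ = |x - y| := Real.sqrt_sq (abs_nonneg _)

lemma one_elem_norm (M : Matrix (Fin 1) (Fin 1) ℂ) : frobNorm M = ‖M 0 0‖ := by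
  unfold frobNorm
  rw [Fin.sum_univ_one, Fin.sum_univ_one, Real.sqrt_sq (norm_nonneg _)]

lemma fex_one : fex 1 = 1 := by unfold fex; norm_num

lemma fex_one_add {s : ℝ} (hs : 0 ≤ s) : fex (1 + s) = 1 + (s : ℂ) * Complex.I := by
  unfold fex
  rw [min_eq_right (by linarith : (1:ℝ) ≤ 1 + s),
    max_eq_left (by linarith : (0:ℝ) ≤ 1 + s - 1)]
  norm_num

noncomputable def Pex : ℝ → ℝ := fun θ => θ ^ 2 * (3 + θ ^ 2) ^ 2 + 4
noncomputable def Qex : ℝ → ℝ := fun θ => (θ ^ 3 + θ ^ 2 + θ - 1) ^ 2 + (1 + θ) ^ 4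

lemma part2 (C : ℝ)
    (H : ∀ (f : ℝ → ℂ) (L : ℝ), f 0 = 0 →
      (∀ x y : ℝ, 0 ≤ x → 0 ≤ y → ‖f x - f y‖ ≤ L * |x - y|) →
      ∀ (d : ℕ) (SA SB : SVDData d),
        frobNorm (SA.apply f - SB.apply f)
          ≤ C * L * frobNorm (SA.matrix - SB.matrix)) :
    Real.sqrt 2 ≤ C := by
  have hstep : ∀ θ : ℝ, 0 < θ → Real.sqrt (Pex θ) ≤ C * Real.sqrt (Qex θ) := by
    intro θ hθ
    set r : ℝ := 1 + θ ^ 2 with hrdef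
    have hr : 0 < r := by positivity
    set cc : ℝ := (1 - θ ^ 2) / r with hcc
    set ss : ℝ := 2 * θ / r with hss
    have hss0 : 0 ≤ ss := by positivity
    have hunit : cc ^ 2 + ss ^ 2 = 1 := by
      rw [hcc, hss]
      field_simp
      ring
    set u : ℂ := (cc : ℂ) + (ss : ℂ) * Complex.I with hu
    have hcu : (starRingEnd ℂ) u * u = 1 := by
      rw [hu]
      have : (starRingEnd ℂ) ((cc : ℂ) + (ss : ℂ) * Complex.I)
          = (cc : ℂ) - (ss : ℂ) * Complex.I := by
        simp [Complex.ext_iff]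
      rw [this]
      have expand : ((cc : ℂ) - (ss : ℂ) * Complex.I) * ((cc : ℂ) + (ss : ℂ) * Complex.I)
          = ((cc : ℂ) ^ 2 + (ss : ℂ) ^ 2) := by
        have hI : Complex.I ^ 2 = -1 := Complex.I_sq
        ring_nf
        rw [hI]
        ring
      rw [expand, show ((cc:ℂ) ^ 2 + (ss:ℂ) ^ 2) = ((cc ^ 2 + ss ^ 2 : ℝ) : ℂ) by push_cast; ring,
        hunit, Complex.ofReal_one]
    have hone : (1 : Matrix (Fin 1) (Fin 1) ℂ) ∈ Matrix.unitaryGroup (Fin 1) ℂ := by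
      rw [Matrix.mem_unitaryGroup_iff]
      simp
    have hSBU : Matrix.diagonal (fun _ : Fin 1 => u) ∈ Matrix.unitaryGroup (Fin 1) ℂ := by
      rw [Matrix.mem_unitaryGroup_iff', Matrix.star_eq_conjTranspose,
        Matrix.diagonal_conjTranspose, Matrix.diagonal_mul_diagonal]
      ext i j
      fin_cases i
      fin_cases j
      simp only [Matrix.diagonal_apply_eq, Matrix.one_apply_eq]
      simpa using hcu
    set SA : SVDData 1 := ⟨1, 1, fun _ => 1, hone, hone, fun _ => zero_le_one⟩ with hSA
    set SB : SVDData 1 := ⟨Matrix.diagonal (fun _ => u), 1, fun _ => 1 + ss, hSBU, hone,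
      fun _ => by positivity⟩ with hSB
    have happly : ∀ v : Fin 1 → ℂ, (1 : Matrix (Fin 1) (Fin 1) ℂ) * Matrix.diagonal v
        * (1 : Matrix (Fin 1) (Fin 1) ℂ)ᴴ = Matrix.diagonal v := by
      intro v
      rw [Matrix.conjTranspose_one, Matrix.one_mul, Matrix.mul_one]
    have hdiagmul : ∀ v : Fin 1 → ℂ, Matrix.diagonal (fun _ : Fin 1 => u) * Matrix.diagonal v
        * (1 : Matrix (Fin 1) (Fin 1) ℂ)ᴴ = Matrix.diagonal (fun i => u * v i) := by
      intro v
      rw [Matrix.conjTranspose_one, Matrix.mul_one, Matrix.diagonal_mul_diagonal]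
    have hHa := H fex 1 fex_zero fex_lip 1 SA SB
    have eA : SA.apply fex = Matrix.diagonal (fun _ : Fin 1 => fex 1) := happly _
    have eB : SB.apply fex = Matrix.diagonal (fun _ : Fin 1 => u * fex (1 + ss)) := hdiagmul _
    have eMA : SA.matrix = Matrix.diagonal (fun _ : Fin 1 => ((1 : ℝ) : ℂ)) := happly _
    have eMB : SB.matrix = Matrix.diagonal (fun _ : Fin 1 => u * ((1 + ss : ℝ) : ℂ)) :=
      hdiagmul _
    rw [eA, eB, eMA, eMB, Matrix.diagonal_sub, Matrix.diagonal_sub,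
      one_elem_norm, one_elem_norm, Matrix.diagonal_apply_eq, Matrix.diagonal_apply_eq] at hHa
    rw [fex_one, fex_one_add hss0] at hHa
    -- compute the two norms
    have hnum : ‖(1 : ℂ) - u * (1 + (ss : ℂ) * Complex.I)‖
        = Real.sqrt ((1 - cc + ss ^ 2) ^ 2 + (ss * (1 + cc)) ^ 2) := by
      have : (1 : ℂ) - u * (1 + (ss : ℂ) * Complex.I)
          = ((1 - cc + ss ^ 2 : ℝ) : ℂ) + ((-(ss * (1 + cc)) : ℝ) : ℂ) * Complex.I := by
        rw [hu]
        apply Complex.ext <;> simp [pow_two] <;> ring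
      rw [this, Complex.norm_add_mul_I, neg_sq]
    have hden : ‖((1 : ℝ) : ℂ) - u * ((1 + ss : ℝ) : ℂ)‖
        = Real.sqrt ((1 - cc * (1 + ss)) ^ 2 + (ss * (1 + ss)) ^ 2) := by
      have : ((1 : ℝ) : ℂ) - u * ((1 + ss : ℝ) : ℂ)
          = ((1 - cc * (1 + ss) : ℝ) : ℂ) + ((-(ss * (1 + ss)) : ℝ) : ℂ) * Complex.I := by
        rw [hu]
        apply Complex.ext <;> simp [pow_two] <;> ring
      rw [this, Complex.norm_add_mul_I, neg_sq]
    rw [hnum, hden] at hHa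
    -- algebraic identities
    have hrne : r ≠ 0 := ne_of_gt hr
    have hidP : (1 - cc + ss ^ 2) ^ 2 + (ss * (1 + cc)) ^ 2
        = (2 * θ / r ^ 2) ^ 2 * Pex θ := by
      rw [hcc, hss, Pex, hrdef]
      field_simp
      ring
    have hidQ : (1 - cc * (1 + ss)) ^ 2 + (ss * (1 + ss)) ^ 2
        = (2 * θ / r ^ 2) ^ 2 * Qex θ := by
      rw [hcc, hss, Qex, hrdef]
      field_simp
      ring
    have ht : 0 < 2 * θ / r ^ 2 := by positivity
    have hPpos : 0 ≤ Pex θ := by rw [Pex]; positivity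
    have hQpos : 0 ≤ Qex θ := by rw [Qex]; positivity
    rw [hidP, hidQ, Real.sqrt_mul (sq_nonneg _), Real.sqrt_mul (sq_nonneg _),
      Real.sqrt_sq (le_of_lt ht), mul_one] at hHa
    have hHa' : (2 * θ / r ^ 2) * Real.sqrt (Pex θ)
        ≤ (2 * θ / r ^ 2) * (C * Real.sqrt (Qex θ)) := by
      calc (2 * θ / r ^ 2) * Real.sqrt (Pex θ)
          ≤ C * ((2 * θ / r ^ 2) * Real.sqrt (Qex θ)) := hHa
        _ = (2 * θ / r ^ 2) * (C * Real.sqrt (Qex θ)) := by ring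
    exact le_of_mul_le_mul_left hHa' ht
  -- pass to the limit θ → 0⁺
  have hcontP : Filter.Tendsto (fun θ : ℝ => Real.sqrt (Pex θ))
      (nhdsWithin 0 (Set.Ioi 0)) (nhds 2) := by
    have hc : Continuous fun θ : ℝ => Real.sqrt (Pex θ) := by
      apply Real.continuous_sqrt.comp
      unfold Pex
      fun_prop
    have := (hc.tendsto 0).mono_left (nhdsWithin_le_nhds (s := Set.Ioi (0:ℝ)))
    have hval : Real.sqrt (Pex 0) = 2 := by
      rw [Pex]
      norm_num
    rwa [hval] at this
  have hcontQ : Filter.Tendsto (fun θ : ℝ => C * Real.sqrt (Qex θ))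
      (nhdsWithin 0 (Set.Ioi 0)) (nhds (C * Real.sqrt 2)) := by
    have hc : Continuous fun θ : ℝ => C * Real.sqrt (Qex θ) := by
      apply Continuous.mul continuous_const
      apply Real.continuous_sqrt.comp
      unfold Qex
      fun_prop
    have := (hc.tendsto 0).mono_left (nhdsWithin_le_nhds (s := Set.Ioi (0:ℝ)))
    have hval : Qex 0 = 2 := by rw [Qex]; norm_num
    rwa [hval] at this
  have hev : ∀ᶠ θ in nhdsWithin (0:ℝ) (Set.Ioi 0),
      Real.sqrt (Pex θ) ≤ C * Real.sqrt (Qex θ) := by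
    filter_upwards [self_mem_nhdsWithin] with θ hθ
    exact hstep θ hθ
  have hlim : (2 : ℝ) ≤ C * Real.sqrt 2 := le_of_tendsto_of_tendsto hcontP hcontQ hev
  have h2 : Real.sqrt 2 * Real.sqrt 2 = 2 := Real.mul_self_sqrt (by norm_num)
  have hpos : 0 < Real.sqrt 2 := Real.sqrt_pos.mpr (by norm_num)
  nlinarith [hlim, h2, hpos]

end Helper17

theorem stmt_17 :
    (∀ (f : ℝ → ℂ) (L : ℝ), f 0 = 0 →
      (∀ x y : ℝ, 0 ≤ x → 0 ≤ y → ‖f x - f y‖ ≤ L * |x - y|) →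
      ∀ (d : ℕ) (SA SB : SVDData d),
        frobNorm (SA.apply f - SB.apply f)
          ≤ Real.sqrt 2 * L * frobNorm (SA.matrix - SB.matrix)) ∧
    (∀ C : ℝ,
      (∀ (f : ℝ → ℂ) (L : ℝ), f 0 = 0 →
        (∀ x y : ℝ, 0 ≤ x → 0 ≤ y → ‖f x - f y‖ ≤ L * |x - y|) →
        ∀ (d : ℕ) (SA SB : SVDData d),
          frobNorm (SA.apply f - SB.apply f)
            ≤ C * L * frobNorm (SA.matrix - SB.matrix)) →
      Real.sqrt 2 ≤ C) := by
  constructor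
  · exact fun f L hf0 hf d SA SB => Helper17.part1 f L hf0 hf d SA SB
  · exact fun C hC => Helper17.part2 C hC
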